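/- For the projective plane function f : ({0} ∪ [k])^n → {0,1} (f(x)=1 iff some edge has all its vertices pointing to it), any certificate for f(0^n) = 0 — i.e., any set S of vertices whose pointers are fixed to 0 such that every input that is 0 on S has f-value 0 — must be a vertex cover of the edge set; in particular, fixing all k vertices of any single edge to 0 is such a certificate, so C(f, 0^n) ≤ k. -/

import Mathlib

/-- For the projective plane function, any certificate for `f(0^n) = 0` that
fixes a set `S` of vertices to the null pointer must be a vertex cover of the
edge set; conversely, fixing all `k` vertices of any single edge to the null
pointer is such a certificate, so `C(f, 0^n) ≤ k`. -/
theorem projective_plane_zero_certificates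
    {V : Type*} [Fintype V] [DecidableEq V]
    (k : ℕ) (E : Finset (Finset V))
    (hV : Fintype.card V = k ^ 2 - k + 1)
    (hE : E.card = k ^ 2 - k + 1)
    (huniform : ∀ e ∈ E, e.card = k)
    (hdeg : ∀ v : V, (E.filter fun e => v ∈ e).card = k)
    (hpoints : ∀ v w : V, v ≠ w → ∃! e, e ∈ E ∧ v ∈ e ∧ w ∈ e)
    (hlines : ∀ e ∈ E, ∀ e' ∈ E, e ≠ e' → (e ∩ e').card = 1)
    (ord : V → Finset V → Fin k)
    (hordv : ∀ v : V, ∀ e ∈ E, ∀ e' ∈ E, v ∈ e → v ∈ e' → e ≠ e' →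
      ord v e ≠ ord v e')
    (horde : ∀ e ∈ E, ∀ v ∈ e, ∀ u ∈ e, u ≠ v → ord u e ≠ ord v e)
    (f : (V → Option (Fin k)) → Bool)
    (hf : ∀ x : V → Option (Fin k), f x = true ↔
      ∃ e ∈ E, ∀ v ∈ e, x v = some (ord v e)) :
    (∀ S : Finset V,
      (∀ x : V → Option (Fin k), (∀ v ∈ S, x v = none) → f x = false) →
      ∀ e ∈ E, (e ∩ S).Nonempty) ∧
    (∀ e ∈ E, ∀ x : V → Option (Fin k),
      (∀ v ∈ e, x v = none) → f x = false) := by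
  constructor
  · intro S hS e he
    by_contra hempty
    rw [Finset.not_nonempty_iff_eq_empty] at hempty
    set x : V → Option (Fin k) := fun v => if v ∈ e then some (ord v e) else none with hx
    have hzero : ∀ v ∈ S, x v = none := by
      intro v hv
      have : v ∉ e := by
        intro hve
        have : v ∈ e ∩ S := Finset.mem_inter.mpr ⟨hve, hv⟩
        simp [hempty] at this
      simp [hx, this]
    have hfalse := hS x hzero
    have htrue : f x = true := (hf x).mpr ⟨e, he, fun v hv => by simp [hx, hv]⟩
    simp [hfalse] at htrue
  · intro e he x hx
    by_contra hne
    have htrue : f x = true := by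
      cases h : f x
      · exact absurd h hne
      · rfl
    obtain ⟨e', he', hve'⟩ := (hf x).mp htrue
    rcases eq_or_ne e e' with rfl | hneq
    · -- e nonempty since k > 0 via ord
      have hV1 : 0 < Fintype.card V := by omega
      obtain ⟨v⟩ := Fintype.card_pos_iff.mp hV1
      have hk : 0 < k := (ord v ∅).pos
      have : e.Nonempty := Finset.card_pos.mp (by rw [huniform e he]; exact hk)
      obtain ⟨w, hw⟩ := this
      have h1 := hx w hw
      have h2 := hve' w hw
      rw [h1] at h2
      exact nomatch h2
    · have hcard := hlines e he e' he' hneq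
      have : (e ∩ e').Nonempty := Finset.card_pos.mp (by omega)
      obtain ⟨w, hw⟩ := this
      rw [Finset.mem_inter] at hw
      have h1 := hx w hw.1
      have h2 := hve' w hw.2
      rw [h1] at h2
      exact nomatch h2
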